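/- Let X ~ N(μ, σ²) with σ > 0 and let q̃ = Φ(x*) where x* is the unique negative solution of −xΦ(x) − φ(x)(1 − 2Φ(x)) = 0. For the sets L = A[0, q̃], M = A[q̃, 1 − q̃], R = A[1 − q̃, 1], the conditional variances coincide: σ²_L = σ²_M = σ²_R, where σ²_A = E[(X − E[X | X ∈ A])² | X ∈ A]. -/

import Mathlib

open MeasureTheory ProbabilityTheory Filter Real
open scoped Classical NNReal Topology BigOperators ProbabilityTheory

noncomputable section

/-- The standard normal density function φ. -/
def stdPdf (x : ℝ) : ℝ := (Real.sqrt (2 * Real.pi))⁻¹ * Real.exp (-(x ^ 2) / 2)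

/-- The law of N(m, s²). -/
def gauss (m s : ℝ) : Measure ℝ := gaussianReal m (Real.toNNReal (s ^ 2))

/-- The cdf of N(m, s²). -/
def normCdf (m s : ℝ) (x : ℝ) : ℝ := cdf (gauss m s) x

/-- The standard normal cdf Φ. -/
def stdCdf (x : ℝ) : ℝ := normCdf 0 1 x

/-- The quantile function of N(m, s²) (for 0 < p < 1). -/
def normQuantile (m s : ℝ) (p : ℝ) : ℝ := sInf {x : ℝ | p ≤ normCdf m s x}

/-- The standard normal quantile function Φ⁻¹ (for 0 < p < 1). -/
def stdQuantile (p : ℝ) : ℝ := normQuantile 0 1 p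

/-- The conditioning set A[α, β] = {x : F⁻¹(α) < x ≤ F⁻¹(β)} for N(m, s²), with the
conventions F⁻¹(0) = −∞ (no lower restriction) and F⁻¹(1) = +∞ (no upper restriction). -/
def condSet (m s α β : ℝ) : Set ℝ :=
  {x : ℝ | (α = 0 ∨ normQuantile m s α < x) ∧ (β = 1 ∨ x ≤ normQuantile m s β)}

/-- Conditional mean μ_A = E[X | X ∈ A[α,β]] for X ~ N(m, s²). -/
def condMean (m s α β : ℝ) : ℝ := ∫ x, x ∂((gauss m s)[|condSet m s α β])

/-- Conditional variance σ²_A = E[(X − μ_A)² | X ∈ A[α,β]] for X ~ N(m, s²). -/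
def condVar (m s α β : ℝ) : ℝ :=
  ∫ x, (x - condMean m s α β) ^ 2 ∂((gauss m s)[|condSet m s α β])

/-- Conditional fourth central moment E[(X − μ_A)⁴ | X ∈ A[α,β]] for X ~ N(m, s²). -/
def condMom4 (m s α β : ℝ) : ℝ :=
  ∫ x, (x - condMean m s α β) ^ 4 ∂((gauss m s)[|condSet m s α β])

/-- Conditional kurtosis κ_A = (σ²_A)⁻² E[(X − μ_A)⁴ | X ∈ A[α,β]] for X ~ N(m, s²). -/
def condKurt (m s α β : ℝ) : ℝ := (condVar m s α β ^ 2)⁻¹ * condMom4 m s α β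

/-- The asymptotic variance τ²_A of the conditional variance estimator, with the
convention 0·∞ = 0 when α = 0 (a = −∞) or β = 1 (b = +∞). -/
def tauSq (m s α β : ℝ) : ℝ :=
  ((β - α) ^ 2)⁻¹ *
    ((β - α) * condVar m s α β ^ 2 * (condKurt m s α β - 1)
      + (if α = 0 then 0 else
          α * (1 - α) * ((normQuantile m s α - condMean m s α β) ^ 2 - condVar m s α β) ^ 2)
      + (if β = 1 then 0 else
          β * (1 - β) * ((normQuantile m s β - condMean m s α β) ^ 2 - condVar m s α β) ^ 2)
      - (if α = 0 ∨ β = 1 then 0 else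
          2 * α * (1 - β) * ((normQuantile m s α - condMean m s α β) ^ 2 - condVar m s α β)
            * ((normQuantile m s β - condMean m s α β) ^ 2 - condVar m s α β)))

/-- The random variable Y^A (as a function of the value of X), for X ~ N(m, s²) and
A = A[α,β]; terms involving the infinite endpoints a = −∞ (α = 0) or b = +∞ (β = 1)
vanish by the convention 0·∞ = 0. -/
def Yfun (m s α β : ℝ) (x : ℝ) : ℝ :=
  (if x ∈ condSet m s α β then (x - condMean m s α β) ^ 2 - condVar m s α β else 0)
    + (if α = 0 then 0 else
        ((if x ≤ normQuantile m s α then (1 : ℝ) else 0) - α)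
          * ((normQuantile m s α - condMean m s α β) ^ 2 - condVar m s α β))
    + (if β = 1 then 0 else
        (β - if x ≤ normQuantile m s β then (1 : ℝ) else 0)
          * ((normQuantile m s β - condMean m s α β) ^ 2 - condVar m s α β))

/-- Covariance of U(X) and V(X) for X ~ N(m, s²). -/
def covG (m s : ℝ) (U V : ℝ → ℝ) : ℝ :=
  ∫ x, U x * V x ∂(gauss m s) - (∫ x, U x ∂(gauss m s)) * (∫ x, V x ∂(gauss m s))

/-- Variance of U(X) for X ~ N(m, s²). -/
def varG (m s : ℝ) (U : ℝ → ℝ) : ℝ := covG m s U U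

/-- The quantile pairs defining the sets L = A[0,q̃], M = A[q̃,1−q̃], R = A[1−q̃,1]. -/
def lmrSet (q : ℝ) : Fin 3 → ℝ × ℝ := ![(0, q), (q, 1 - q), (1 - q, 1)]

/-- The weights (q̃, 1 − 2q̃, q̃). -/
def lmrWeight (q : ℝ) : Fin 3 → ℝ := ![q, 1 - 2 * q, q]

/-- The 3×3 asymptotic covariance matrix Σ with entries
Σ_{jk} = Cov(Y₁^{A_j}/w_j, Y₁^{A_k}/w_k), for X ~ N(m, s²). -/
def SigmaMat (m s q : ℝ) : Matrix (Fin 3) (Fin 3) ℝ := fun j k =>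
  covG m s (fun x => Yfun m s (lmrSet q j).1 (lmrSet q j).2 x / lmrWeight q j)
    (fun x => Yfun m s (lmrSet q k).1 (lmrSet q k).2 x / lmrWeight q k)

/-- τ² = [1, −2, 1] Σ [1, −2, 1]ᵀ. -/
def tau2 (m s q : ℝ) : ℝ := dotProduct ![1, -2, 1] ((SigmaMat m s q).mulVec ![1, -2, 1])

/-- The normalising constant ρ = τ/σ². -/
def rhoConst (m s q : ℝ) : ℝ := Real.sqrt (tau2 m s q) / s ^ 2

/-- The k-th order statistic (k = 1, …, n) of the first n sample points X₁, …, Xₙ. -/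
def orderStat {Ω : Type*} (X : ℕ → Ω → ℝ) (n k : ℕ) (ω : Ω) : ℝ :=
  sInf {t : ℝ | k ≤ (Finset.filter (fun i => X i ω ≤ t) (Finset.range n)).card}

/-- Conditional sample mean X̄_A = m_n⁻¹ Σ_{i=⌊nα⌋+1}^{⌊nβ⌋} X_(i), m_n = ⌊nβ⌋ − ⌊nα⌋. -/
def condSampleMean {Ω : Type*} (X : ℕ → Ω → ℝ) (α β : ℝ) (n : ℕ) (ω : Ω) : ℝ :=
  ((⌊(n : ℝ) * β⌋₊ - ⌊(n : ℝ) * α⌋₊ : ℕ) : ℝ)⁻¹ *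
    ∑ i ∈ Finset.Ioc ⌊(n : ℝ) * α⌋₊ ⌊(n : ℝ) * β⌋₊, orderStat X n i ω

/-- Conditional sample variance σ̂²_A = m_n⁻¹ Σ_{i=⌊nα⌋+1}^{⌊nβ⌋} (X_(i) − X̄_A)². -/
def condSampleVar {Ω : Type*} (X : ℕ → Ω → ℝ) (α β : ℝ) (n : ℕ) (ω : Ω) : ℝ :=
  ((⌊(n : ℝ) * β⌋₊ - ⌊(n : ℝ) * α⌋₊ : ℕ) : ℝ)⁻¹ *
    ∑ i ∈ Finset.Ioc ⌊(n : ℝ) * α⌋₊ ⌊(n : ℝ) * β⌋₊,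
      (orderStat X n i ω - condSampleMean X α β n ω) ^ 2

/-- Conditional variance estimator centered at a given value c:
m_n⁻¹ Σ_{i=⌊nα⌋+1}^{⌊nβ⌋} (X_(i) − c)². -/
def condSampleVarKnown {Ω : Type*} (X : ℕ → Ω → ℝ) (α β : ℝ) (c : ℝ) (n : ℕ) (ω : Ω) : ℝ :=
  ((⌊(n : ℝ) * β⌋₊ - ⌊(n : ℝ) * α⌋₊ : ℕ) : ℝ)⁻¹ *
    ∑ i ∈ Finset.Ioc ⌊(n : ℝ) * α⌋₊ ⌊(n : ℝ) * β⌋₊, (orderStat X n i ω - c) ^ 2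

/-- Convergence in distribution: the laws of S n under P converge weakly to ν,
tested against bounded continuous functions. -/
def ConvInDistrib {Ω : Type*} [MeasurableSpace Ω] (P : Measure Ω) (S : ℕ → Ω → ℝ)
    (ν : Measure ℝ) : Prop :=
  ∀ f : BoundedContinuousFunction ℝ ℝ,
    Tendsto (fun n => ∫ ω, f (S n ω) ∂P) atTop (𝓝 (∫ x, f x ∂ν))

end

noncomputable section

/-- The k-th smallest value (k = 1, …, n) among x 0, …, x (n−1). -/
def orderStatF (n : ℕ) (x : ℕ → ℝ) (k : ℕ) : ℝ :=
  sInf {t : ℝ | k ≤ (Finset.filter (fun i => x i ≤ t) (Finset.range n)).card}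

/-- Conditional sample mean of the data x over the index range ⌊nα⌋+1, …, ⌊nβ⌋. -/
def sampleMeanF (n : ℕ) (α β : ℝ) (x : ℕ → ℝ) : ℝ :=
  ((⌊(n : ℝ) * β⌋₊ - ⌊(n : ℝ) * α⌋₊ : ℕ) : ℝ)⁻¹ *
    ∑ i ∈ Finset.Ioc ⌊(n : ℝ) * α⌋₊ ⌊(n : ℝ) * β⌋₊, orderStatF n x i

/-- Conditional sample variance of the data x over the index range ⌊nα⌋+1, …, ⌊nβ⌋. -/
def sampleVarF (n : ℕ) (α β : ℝ) (x : ℕ → ℝ) : ℝ :=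
  ((⌊(n : ℝ) * β⌋₊ - ⌊(n : ℝ) * α⌋₊ : ℕ) : ℝ)⁻¹ *
    ∑ i ∈ Finset.Ioc ⌊(n : ℝ) * α⌋₊ ⌊(n : ℝ) * β⌋₊,
      (orderStatF n x i - sampleMeanF n α β x) ^ 2

/-- The (unnormalised) test statistic
T(x) = (σ̂²_L(x) + σ̂²_R(x) − 2 σ̂²_M(x)) √n / σ̂²(x) for the split 0 < q̃ < 1 − q̃ < 1. -/
def TstatF (q : ℝ) (n : ℕ) (x : ℕ → ℝ) : ℝ :=
  (sampleVarF n 0 q x + sampleVarF n (1 - q) 1 x - 2 * sampleVarF n q (1 - q) x)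
    * Real.sqrt n / sampleVarF n 0 1 x

end


section
open MeasureTheory ProbabilityTheory Filter Real Set
open scoped NNReal ENNReal

lemma myint_pow_mul_exp (n : ℕ) {b : ℝ} (hb : 0 < b) :
    Integrable (fun x : ℝ => x ^ n * Real.exp (-b * x ^ 2)) := by
  have h := integrable_rpow_mul_exp_neg_mul_sq hb (s := n)
    (by exact_mod_cast neg_one_lt_zero.trans_le (Nat.cast_nonneg n))
  simpa [Real.rpow_natCast] using h

lemma mytendsto_exp_sq {b : ℝ} (hb : 0 < b) :
    Tendsto (fun x : ℝ => Real.exp (-b * x ^ 2)) (Filter.atTop) (nhds 0) := by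
  apply Real.tendsto_exp_atBot.comp
  have h1 : Tendsto (fun x : ℝ => b * x ^ 2) atTop atTop :=
    (tendsto_pow_atTop (two_ne_zero)).const_mul_atTop hb
  exact (tendsto_neg_atTop_atBot.comp h1).congr (fun x => by simp [neg_mul])

lemma mytendsto_mul_exp_sq {b : ℝ} (hb : 0 < b) :
    Tendsto (fun x : ℝ => x * Real.exp (-b * x ^ 2)) (Filter.atTop) (nhds 0) := by
  have hexp : Tendsto (fun x : ℝ => Real.exp (-(1/2) * x)) atTop (nhds 0) :=
    (Real.tendsto_exp_neg_atTop_nhds_zero.comp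
      (tendsto_id.const_mul_atTop (by norm_num : (0:ℝ) < 1/2))).congr
      (fun x => by simp [neg_mul])
  have h := Asymptotics.IsLittleO.tendsto_zero_of_tendsto
    (rpow_mul_exp_neg_mul_sq_isLittleO_exp_neg hb 1) hexp
  simpa using h

lemma mytendsto_exp_sq_bot {b : ℝ} (hb : 0 < b) :
    Tendsto (fun x : ℝ => Real.exp (-b * x ^ 2)) (Filter.atBot) (nhds 0) := by
  have h := (mytendsto_exp_sq hb).comp tendsto_neg_atBot_atTop
  exact h.congr (fun x => by simp)

lemma mytendsto_mul_exp_sq_bot {b : ℝ} (hb : 0 < b) :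
    Tendsto (fun x : ℝ => x * Real.exp (-b * x ^ 2)) (Filter.atBot) (nhds 0) := by
  have h := ((mytendsto_mul_exp_sq hb).comp tendsto_neg_atBot_atTop).neg
  simp only [Function.comp] at h
  have h2 : Tendsto (fun x : ℝ => x * Real.exp (-b * x ^ 2)) atBot (nhds (-0)) :=
    h.congr (fun x => by simp)
  simpa using h2

section
variable {m s : ℝ}

lemma myvcoe (hs : 0 < s) : ((Real.toNNReal (s ^ 2) : ℝ≥0) : ℝ) = s ^ 2 :=
  Real.coe_toNNReal _ (sq_nonneg s)

lemma myvne (hs : 0 < s) : (Real.toNNReal (s ^ 2)) ≠ 0 := by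
  rw [ne_eq, Real.toNNReal_eq_zero, not_le]
  positivity

lemma myp_def (hs : 0 < s) (x : ℝ) :
    gaussianPDFReal m (Real.toNNReal (s ^ 2)) x
      = (Real.sqrt (2 * π * s ^ 2))⁻¹ * Real.exp (-(x - m) ^ 2 / (2 * s ^ 2)) := by
  rw [gaussianPDFReal, myvcoe hs]

lemma myp_pos (hs : 0 < s) (x : ℝ) : 0 < gaussianPDFReal m (Real.toNNReal (s ^ 2)) x :=
  gaussianPDFReal_pos _ _ _ (myvne hs)

lemma myp_deriv (hs : 0 < s) (x : ℝ) :
    HasDerivAt (gaussianPDFReal m (Real.toNNReal (s ^ 2)))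
      (-((x - m) / s ^ 2) * gaussianPDFReal m (Real.toNNReal (s ^ 2)) x) x := by
  have hs2 : (s:ℝ) ^ 2 ≠ 0 := by positivity
  have h1 : HasDerivAt (fun y : ℝ => -(y - m) ^ 2 / (2 * s ^ 2))
      (-(x - m) / s ^ 2) x := by
    have : HasDerivAt (fun y : ℝ => (y - m) ^ 2) (2 * (x - m)) x := by
      exact (((hasDerivAt_id x).sub_const m).pow 2).congr_deriv (by simp)
    have h2 := (this.neg).div_const (2 * s ^ 2)
    refine h2.congr_deriv ?_
    field_simp
  have h3 := ((h1.exp).const_mul ((Real.sqrt (2 * π * s ^ 2))⁻¹))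
  have h4 : ∀ y, (Real.sqrt (2 * π * s ^ 2))⁻¹ * Real.exp (-(y - m) ^ 2 / (2 * s ^ 2))
      = gaussianPDFReal m (Real.toNNReal (s ^ 2)) y := fun y => (myp_def hs y).symm
  have h5 : HasDerivAt (gaussianPDFReal m (Real.toNNReal (s ^ 2)))
      ((Real.sqrt (2 * π * s ^ 2))⁻¹ * (Real.exp (-(x - m) ^ 2 / (2 * s ^ 2)) * (-(x - m) / s ^ 2))) x := by
    refine HasDerivAt.congr_of_eventuallyEq h3 ?_
    filter_upwards with y using (h4 y).symm
  convert h5 using 1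
  rw [← h4 x]
  ring

lemma myint_xk (hs : 0 < s) (k : ℕ) :
    Integrable (fun x : ℝ => (x - m) ^ k * gaussianPDFReal m (Real.toNNReal (s ^ 2)) x) := by
  have hb : (0:ℝ) < (2 * s ^ 2)⁻¹ := by positivity
  have h := ((myint_pow_mul_exp k hb).comp_sub_right m).const_mul ((Real.sqrt (2 * π * s ^ 2))⁻¹)
  refine h.congr ?_
  filter_upwards with x
  rw [myp_def hs]
  ring_nf
end
section
variable {m s : ℝ}

lemma myp_form (hs : 0 < s) (x : ℝ) :
    gaussianPDFReal m (Real.toNNReal (s ^ 2)) x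
      = (Real.sqrt (2 * π * s ^ 2))⁻¹ * Real.exp (-(2 * s ^ 2)⁻¹ * (x - m) ^ 2) := by
  rw [myp_def hs]
  congr 1
  congr 1
  field_simp

lemma mysub_tendsto_bot : Tendsto (fun x : ℝ => x - m) atBot atBot :=
  tendsto_atBot_add_const_right _ (-m) tendsto_id

lemma mysub_tendsto_top : Tendsto (fun x : ℝ => x - m) atTop atTop :=
  tendsto_atTop_add_const_right _ (-m) tendsto_id

lemma myp_tendsto_bot (hs : 0 < s) :
    Tendsto (gaussianPDFReal m (Real.toNNReal (s ^ 2))) atBot (nhds 0) := by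
  have hb : (0:ℝ) < (2 * s ^ 2)⁻¹ := by positivity
  have h := (((mytendsto_exp_sq_bot hb).comp (mysub_tendsto_bot (m := m))).const_mul
    ((Real.sqrt (2 * π * s ^ 2))⁻¹))
  rw [mul_zero] at h
  exact h.congr (fun x => (myp_form hs x).symm)

lemma myp_tendsto_top (hs : 0 < s) :
    Tendsto (gaussianPDFReal m (Real.toNNReal (s ^ 2))) atTop (nhds 0) := by
  have hb : (0:ℝ) < (2 * s ^ 2)⁻¹ := by positivity
  have h := (((mytendsto_exp_sq hb).comp (mysub_tendsto_top (m := m))).const_mul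
    ((Real.sqrt (2 * π * s ^ 2))⁻¹))
  rw [mul_zero] at h
  exact h.congr (fun x => (myp_form hs x).symm)

lemma myxp_tendsto_bot (hs : 0 < s) :
    Tendsto (fun x => (x - m) * gaussianPDFReal m (Real.toNNReal (s ^ 2)) x) atBot (nhds 0) := by
  have hb : (0:ℝ) < (2 * s ^ 2)⁻¹ := by positivity
  have h := (((mytendsto_mul_exp_sq_bot hb).comp (mysub_tendsto_bot (m := m))).const_mul
    ((Real.sqrt (2 * π * s ^ 2))⁻¹))
  rw [mul_zero] at h
  refine h.congr (fun x => ?_)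
  simp only [Function.comp]
  rw [myp_form hs]
  ring

lemma myxp_tendsto_top (hs : 0 < s) :
    Tendsto (fun x => (x - m) * gaussianPDFReal m (Real.toNNReal (s ^ 2)) x) atTop (nhds 0) := by
  have hb : (0:ℝ) < (2 * s ^ 2)⁻¹ := by positivity
  have h := (((mytendsto_mul_exp_sq hb).comp (mysub_tendsto_top (m := m))).const_mul
    ((Real.sqrt (2 * π * s ^ 2))⁻¹))
  rw [mul_zero] at h
  refine h.congr (fun x => ?_)
  simp only [Function.comp]
  rw [myp_form hs]
  ring

lemma myint_x1 (hs : 0 < s) :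
    Integrable (fun x : ℝ => (x - m) * gaussianPDFReal m (Real.toNNReal (s ^ 2)) x) := by
  have h := myint_xk (m := m) hs 1
  simpa using h

lemma myint_x2 (hs : 0 < s) :
    Integrable (fun x : ℝ => ((x - m) ^ 2 - s ^ 2) * gaussianPDFReal m (Real.toNNReal (s ^ 2)) x) := by
  have h := (myint_xk (m := m) hs 2).sub ((integrable_gaussianPDFReal m (Real.toNNReal (s ^ 2))).const_mul (s ^ 2))
  refine h.congr ?_
  filter_upwards with x
  simp only [Pi.sub_apply]
  ring

lemma myderiv_A1 (hs : 0 < s) (x : ℝ) :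
    HasDerivAt (fun y => -s ^ 2 * gaussianPDFReal m (Real.toNNReal (s ^ 2)) y)
      ((x - m) * gaussianPDFReal m (Real.toNNReal (s ^ 2)) x) x := by
  have hs2 : (s:ℝ) ^ 2 ≠ 0 := by positivity
  have h := (myp_deriv (m := m) hs x).const_mul (-s ^ 2)
  refine h.congr_deriv ?_
  field_simp

lemma myderiv_A2 (hs : 0 < s) (x : ℝ) :
    HasDerivAt (fun y => -s ^ 2 * ((y - m) * gaussianPDFReal m (Real.toNNReal (s ^ 2)) y))
      (((x - m) ^ 2 - s ^ 2) * gaussianPDFReal m (Real.toNNReal (s ^ 2)) x) x := by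
  have hs2 : (s:ℝ) ^ 2 ≠ 0 := by positivity
  have hid : HasDerivAt (fun y : ℝ => y - m) 1 x := (hasDerivAt_id x).sub_const m
  have h := (hid.mul (myp_deriv (m := m) hs x)).const_mul (-s ^ 2)
  refine h.congr_deriv ?_
  field_simp
  ring

lemma myint_Iic1 (hs : 0 < s) (c : ℝ) :
    ∫ x in Iic c, (x - m) * gaussianPDFReal m (Real.toNNReal (s ^ 2)) x
      = -s ^ 2 * gaussianPDFReal m (Real.toNNReal (s ^ 2)) c := by
  have h := integral_Iic_of_hasDerivAt_of_tendsto'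
    (f := fun y => -s ^ 2 * gaussianPDFReal m (Real.toNNReal (s ^ 2)) y)
    (f' := fun x => (x - m) * gaussianPDFReal m (Real.toNNReal (s ^ 2)) x)
    (a := c) (m := 0)
    (fun x _ => myderiv_A1 hs x) (myint_x1 hs).integrableOn
    (by simpa using (myp_tendsto_bot (m := m) hs).const_mul (-s ^ 2))
  simpa using h

lemma myint_Ioi1 (hs : 0 < s) (c : ℝ) :
    ∫ x in Ioi c, (x - m) * gaussianPDFReal m (Real.toNNReal (s ^ 2)) x
      = s ^ 2 * gaussianPDFReal m (Real.toNNReal (s ^ 2)) c := by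
  have h := integral_Ioi_of_hasDerivAt_of_tendsto'
    (f := fun y => -s ^ 2 * gaussianPDFReal m (Real.toNNReal (s ^ 2)) y)
    (f' := fun x => (x - m) * gaussianPDFReal m (Real.toNNReal (s ^ 2)) x)
    (a := c) (m := 0)
    (fun x _ => myderiv_A1 hs x) (myint_x1 hs).integrableOn
    (by simpa using (myp_tendsto_top (m := m) hs).const_mul (-s ^ 2))
  rw [h]
  ring

lemma myint_Iic2 (hs : 0 < s) (c : ℝ) :
    ∫ x in Iic c, ((x - m) ^ 2 - s ^ 2) * gaussianPDFReal m (Real.toNNReal (s ^ 2)) x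
      = -s ^ 2 * ((c - m) * gaussianPDFReal m (Real.toNNReal (s ^ 2)) c) := by
  have h := integral_Iic_of_hasDerivAt_of_tendsto'
    (f := fun y => -s ^ 2 * ((y - m) * gaussianPDFReal m (Real.toNNReal (s ^ 2)) y))
    (f' := fun x => ((x - m) ^ 2 - s ^ 2) * gaussianPDFReal m (Real.toNNReal (s ^ 2)) x)
    (a := c) (m := 0)
    (fun x _ => myderiv_A2 hs x) (myint_x2 hs).integrableOn
    (by simpa using (myxp_tendsto_bot (m := m) hs).const_mul (-s ^ 2))
  simpa using h

lemma myint_Ioi2 (hs : 0 < s) (c : ℝ) :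
    ∫ x in Ioi c, ((x - m) ^ 2 - s ^ 2) * gaussianPDFReal m (Real.toNNReal (s ^ 2)) x
      = s ^ 2 * ((c - m) * gaussianPDFReal m (Real.toNNReal (s ^ 2)) c) := by
  have h := integral_Ioi_of_hasDerivAt_of_tendsto'
    (f := fun y => -s ^ 2 * ((y - m) * gaussianPDFReal m (Real.toNNReal (s ^ 2)) y))
    (f' := fun x => ((x - m) ^ 2 - s ^ 2) * gaussianPDFReal m (Real.toNNReal (s ^ 2)) x)
    (a := c) (m := 0)
    (fun x _ => myderiv_A2 hs x) (myint_x2 hs).integrableOn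
    (by simpa using (myxp_tendsto_top (m := m) hs).const_mul (-s ^ 2))
  rw [h]
  ring

lemma myint_Ioi0 (hs : 0 < s) (c : ℝ) :
    ∫ x in Ioi c, gaussianPDFReal m (Real.toNNReal (s ^ 2)) x
      = 1 - ∫ x in Iic c, gaussianPDFReal m (Real.toNNReal (s ^ 2)) x := by
  have h := integral_add_compl (measurableSet_Iic (a := c))
    (integrable_gaussianPDFReal m (Real.toNNReal (s ^ 2)))
  rw [Set.compl_Iic] at h
  rw [integral_gaussianPDFReal_eq_one m (myvne hs)] at h
  linarith

lemma myint_Ioc (f : ℝ → ℝ) (hf : Integrable f) {a b : ℝ} (hab : a ≤ b) :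
    ∫ x in Ioc a b, f x = (∫ x in Iic b, f x) - ∫ x in Iic a, f x := by
  have h := setIntegral_union (Set.Iic_disjoint_Ioc le_rfl) measurableSet_Ioc
    hf.integrableOn hf.integrableOn (μ := volume) (f := f) (s := Iic a) (t := Ioc a b)
  rw [Set.Iic_union_Ioc_eq_Iic hab] at h
  linarith

end
section
open scoped ENNReal
variable {m s : ℝ}

instance myprob (m s : ℝ) : IsProbabilityMeasure (gauss m s) :=
  inferInstanceAs (IsProbabilityMeasure (gaussianReal _ _))

lemma mymeas_eq (hs : 0 < s) (A : Set ℝ) :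
    gauss m s A = ENNReal.ofReal (∫ x in A, gaussianPDFReal m (Real.toNNReal (s ^ 2)) x) :=
  gaussianReal_apply_eq_integral m (myvne hs) A

lemma mysetint (hs : 0 < s) {A : Set ℝ} (hA : MeasurableSet A) (g : ℝ → ℝ) :
    ∫ x in A, g x ∂(gauss m s) = ∫ x in A, gaussianPDFReal m (Real.toNNReal (s ^ 2)) x * g x := by
  set p := gaussianPDFReal m (Real.toNNReal (s ^ 2)) with hp
  have h1 : gauss m s = volume.withDensity (fun x => ((p x).toNNReal : ℝ≥0∞)) := by
    rw [gauss, gaussianReal_of_var_ne_zero m (myvne hs)]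
    rfl
  rw [h1, restrict_withDensity hA,
    integral_withDensity_eq_integral_smul ((measurable_gaussianPDFReal m _).real_toNNReal) g]
  congr 1
  funext x
  simp only [NNReal.smul_def, Real.coe_toNNReal _ (gaussianPDFReal_nonneg _ _ x), smul_eq_mul]
  rfl

lemma mycondInt (hs : 0 < s) {A : Set ℝ} (hA : MeasurableSet A)
    (hpos : 0 < ∫ x in A, gaussianPDFReal m (Real.toNNReal (s ^ 2)) x) (g : ℝ → ℝ) :
    ∫ x, g x ∂((gauss m s)[|A])
      = (∫ x in A, gaussianPDFReal m (Real.toNNReal (s ^ 2)) x)⁻¹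
        * ∫ x in A, gaussianPDFReal m (Real.toNNReal (s ^ 2)) x * g x := by
  rw [ProbabilityTheory.cond, integral_smul_measure, mysetint hs hA g, mymeas_eq hs A,
    ← ENNReal.ofReal_inv_of_pos hpos, ENNReal.toReal_ofReal (by positivity), smul_eq_mul]

lemma mycdf_eq (hs : 0 < s) (c : ℝ) :
    normCdf m s c = ∫ x in Set.Iic c, gaussianPDFReal m (Real.toNNReal (s ^ 2)) x := by
  rw [normCdf, cdf_eq_real, measureReal_def, mymeas_eq hs, ENNReal.toReal_ofReal
    (integral_nonneg (fun x => gaussianPDFReal_nonneg _ _ x))]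

lemma mymap (hs : 0 < s) :
    gauss m s = Measure.map (fun x => s * x + m) (gauss 0 1) := by
  have h1 : Measure.map (fun x : ℝ => s * x) (gauss 0 1)
      = gaussianReal 0 (⟨s ^ 2, sq_nonneg _⟩ * Real.toNNReal (1 ^ 2)) := by
    rw [gauss]
    have := gaussianReal_map_const_mul (μ := 0) (v := Real.toNNReal (1 ^ 2)) s
    rw [this]
    congr 1
    ring
  have h2 : Measure.map (fun x : ℝ => x + m) (gaussianReal 0 (⟨s ^ 2, sq_nonneg _⟩ * Real.toNNReal (1 ^ 2)))
      = gaussianReal (0 + m) (⟨s ^ 2, sq_nonneg _⟩ * Real.toNNReal (1 ^ 2)) :=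
    gaussianReal_map_add_const m
  have h3 : Measure.map (fun x : ℝ => s * x + m) (gauss 0 1)
      = gaussianReal (0 + m) (⟨s ^ 2, sq_nonneg _⟩ * Real.toNNReal (1 ^ 2)) := by
    rw [← h2, ← h1, Measure.map_map (by fun_prop) (by fun_prop)]
    rfl
  rw [h3, gauss]
  congr 1
  · ring
  · ext
    erw [NNReal.coe_mul, Real.coe_toNNReal _ (sq_nonneg s)]
    simp
    rfl

lemma mycdf_shift (hs : 0 < s) (t : ℝ) : normCdf m s (m + s * t) = stdCdf t := by
  rw [normCdf, stdCdf, normCdf, cdf_eq_real, cdf_eq_real, measureReal_def, measureReal_def, mymap hs,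
    Measure.map_apply (by fun_prop) measurableSet_Iic]
  congr 2
  ext x
  simp only [Set.mem_preimage, Set.mem_Iic]
  constructor
  · intro h; nlinarith
  · intro h; nlinarith

lemma mypdf_shift (hs : 0 < s) (t : ℝ) :
    gaussianPDFReal m (Real.toNNReal (s ^ 2)) (m + s * t) = stdPdf t / s := by
  rw [myp_def hs, stdPdf]
  have h1 : Real.sqrt (2 * π * s ^ 2) = Real.sqrt (2 * π) * s := by
    rw [Real.sqrt_mul (by positivity), Real.sqrt_sq hs.le]
  rw [h1]
  have h2 : (m + s * t - m) ^ 2 / (2 * s ^ 2) = t ^ 2 / 2 := by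
    field_simp
    ring
  rw [show -(m + s * t - m) ^ 2 / (2 * s ^ 2) = -((m + s * t - m) ^ 2 / (2 * s ^ 2)) by ring, h2]
  have hsp : Real.sqrt (2 * π) > 0 := Real.sqrt_pos.mpr (by positivity)
  field_simp
end
section
open scoped ENNReal
variable {m s : ℝ}

lemma mysetint_pos (hs : 0 < s) {A : Set ℝ} (hA : MeasurableSet A) (hvol : 0 < volume A) :
    0 < ∫ x in A, gaussianPDFReal m (Real.toNNReal (s ^ 2)) x := by
  rw [setIntegral_pos_iff_support_of_nonneg_ae
    (ae_of_all _ (fun x => gaussianPDFReal_nonneg _ _ x))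
    (integrable_gaussianPDFReal m _).integrableOn]
  have hsupp : Function.support (gaussianPDFReal m (Real.toNNReal (s ^ 2))) = Set.univ := by
    ext x
    simp [Function.mem_support, (myp_pos hs x).ne']
  rw [hsupp, Set.univ_inter]
  exact hvol

lemma mycdf_lt (hs : 0 < s) {x y : ℝ} (hxy : x < y) : normCdf m s x < normCdf m s y := by
  rw [mycdf_eq hs, mycdf_eq hs]
  have h := myint_Ioc (gaussianPDFReal m (Real.toNNReal (s ^ 2)))
    (integrable_gaussianPDFReal m _) hxy.le
  have hpos : 0 < ∫ t in Set.Ioc x y, gaussianPDFReal m (Real.toNNReal (s ^ 2)) t :=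
    mysetint_pos hs measurableSet_Ioc (by rw [Real.volume_Ioc]; simp [hxy])
  linarith

lemma myquantile (hs : 0 < s) {r c : ℝ} (hc : normCdf m s c = r) : normQuantile m s r = c := by
  have hset : {x : ℝ | r ≤ normCdf m s x} = Set.Ici c := by
    ext x
    simp only [Set.mem_setOf_eq, Set.mem_Ici]
    constructor
    · intro h
      by_contra hlt
      push_neg at hlt
      exact absurd h (not_le.mpr (hc ▸ mycdf_lt hs hlt))
    · intro h
      rcases eq_or_lt_of_le h with rfl | h'
      · exact hc.ge
      · exact hc ▸ (mycdf_lt hs h').le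
  rw [normQuantile, hset, csInf_Ici]

lemma mystd_pos (t : ℝ) : 0 < stdCdf t := by
  rw [stdCdf, mycdf_eq one_pos]
  exact mysetint_pos one_pos measurableSet_Iic (by rw [Real.volume_Iic]; simp)

lemma mystd_even (x : ℝ) :
    gaussianPDFReal 0 (Real.toNNReal (1 ^ 2)) (-x) = gaussianPDFReal 0 (Real.toNNReal (1 ^ 2)) x := by
  simp [gaussianPDFReal, neg_sq]

lemma mystd_symm (t : ℝ) : stdCdf (-t) = 1 - stdCdf t := by
  have h1 : stdCdf (-t) = ∫ x in Set.Iic (-t), gaussianPDFReal 0 (Real.toNNReal (1 ^ 2)) x := by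
    rw [stdCdf, mycdf_eq one_pos]
  have h2 : ∫ x in Set.Ioi t, gaussianPDFReal 0 (Real.toNNReal (1 ^ 2)) x
      = ∫ x in Set.Iic (-t), gaussianPDFReal 0 (Real.toNNReal (1 ^ 2)) x := by
    rw [← integral_comp_neg_Ioi]
    congr 1
    funext x
    exact (mystd_even x).symm
  rw [h1, ← h2, myint_Ioi0 one_pos, ← mycdf_eq one_pos, ← stdCdf]

lemma mystd_half : stdCdf 0 = 1 / 2 := by
  have h := mystd_symm 0
  rw [neg_zero] at h
  linarith

lemma mystd_lt_half {t : ℝ} (ht : t < 0) : stdCdf t < 1 / 2 := by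
  have h : stdCdf t < stdCdf 0 := mycdf_lt one_pos ht
  rwa [mystd_half] at h

end
section
open scoped ENNReal
variable {m s : ℝ}

lemma myint_Iic2'' (hs : 0 < s) (c : ℝ) :
    ∫ x in Set.Iic c, (x - m) ^ 2 * gaussianPDFReal m (Real.toNNReal (s ^ 2)) x
      = s ^ 2 * (∫ x in Set.Iic c, gaussianPDFReal m (Real.toNNReal (s ^ 2)) x)
        - s ^ 2 * ((c - m) * gaussianPDFReal m (Real.toNNReal (s ^ 2)) c) := by
  have h := myint_Iic2 (m := m) hs c
  have h2 : ∫ x in Set.Iic c, ((x - m) ^ 2 - s ^ 2) * gaussianPDFReal m (Real.toNNReal (s ^ 2)) x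
      = (∫ x in Set.Iic c, (x - m) ^ 2 * gaussianPDFReal m (Real.toNNReal (s ^ 2)) x)
        - s ^ 2 * ∫ x in Set.Iic c, gaussianPDFReal m (Real.toNNReal (s ^ 2)) x := by
    rw [← integral_const_mul _ _, ← integral_sub ((myint_xk hs 2).integrableOn)
      (((integrable_gaussianPDFReal m _).const_mul (s ^ 2)).integrableOn)]
    congr 1
    funext x
    ring
  rw [h2] at h
  linarith

lemma myint_Ioi2'' (hs : 0 < s) (c : ℝ) :
    ∫ x in Set.Ioi c, (x - m) ^ 2 * gaussianPDFReal m (Real.toNNReal (s ^ 2)) x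
      = s ^ 2 * (∫ x in Set.Ioi c, gaussianPDFReal m (Real.toNNReal (s ^ 2)) x)
        + s ^ 2 * ((c - m) * gaussianPDFReal m (Real.toNNReal (s ^ 2)) c) := by
  have h := myint_Ioi2 (m := m) hs c
  have h2 : ∫ x in Set.Ioi c, ((x - m) ^ 2 - s ^ 2) * gaussianPDFReal m (Real.toNNReal (s ^ 2)) x
      = (∫ x in Set.Ioi c, (x - m) ^ 2 * gaussianPDFReal m (Real.toNNReal (s ^ 2)) x)
        - s ^ 2 * ∫ x in Set.Ioi c, gaussianPDFReal m (Real.toNNReal (s ^ 2)) x := by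
    rw [← integral_const_mul _ _, ← integral_sub ((myint_xk hs 2).integrableOn)
      (((integrable_gaussianPDFReal m _).const_mul (s ^ 2)).integrableOn)]
    congr 1
    funext x
    ring
  rw [h2] at h
  linarith

lemma mycondVar_eq (hs : 0 < s) {α β : ℝ} {A : Set ℝ} (hA : MeasurableSet A)
    (hset : condSet m s α β = A)
    (hpos : 0 < ∫ x in A, gaussianPDFReal m (Real.toNNReal (s ^ 2)) x) :
    condVar m s α β
      = (∫ x in A, (x - m) ^ 2 * gaussianPDFReal m (Real.toNNReal (s ^ 2)) x)
          / (∫ x in A, gaussianPDFReal m (Real.toNNReal (s ^ 2)) x)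
        - ((∫ x in A, (x - m) * gaussianPDFReal m (Real.toNNReal (s ^ 2)) x)
          / (∫ x in A, gaussianPDFReal m (Real.toNNReal (s ^ 2)) x)) ^ 2 := by
  set p := gaussianPDFReal m (Real.toNNReal (s ^ 2)) with hp
  set M := ∫ x in A, p x with hM
  set I1 := ∫ x in A, (x - m) * p x with hI1
  set I2 := ∫ x in A, (x - m) ^ 2 * p x with hI2
  have hMne : M ≠ 0 := hpos.ne'
  have h0 : IntegrableOn p A := (integrable_gaussianPDFReal m _).integrableOn
  have hi1 : IntegrableOn (fun x => (x - m) * p x) A := (myint_x1 hs).integrableOn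
  have hi2 : IntegrableOn (fun x => (x - m) ^ 2 * p x) A := ((myint_xk hs 2).integrableOn)
  have hmean : condMean m s α β = m + I1 / M := by
    rw [condMean, hset, mycondInt hs hA hpos]
    have h3 : ∫ x in A, p x * x = I1 + m * M := by
      rw [hI1, hM, ← integral_const_mul _ _, ← integral_add hi1 (h0.const_mul m)]
      congr 1
      funext x
      ring
    rw [h3, ← hp, ← hM]
    field_simp
    ring
  have hvar : ∫ x in A, p x * (x - (m + I1 / M)) ^ 2
      = I2 - 2 * (I1 / M) * I1 + (I1 / M) ^ 2 * M := by
    have h4 : (fun x => p x * (x - (m + I1 / M)) ^ 2)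
        = fun x => (x - m) ^ 2 * p x
          + ((-(2 * (I1 / M))) * ((x - m) * p x) + (I1 / M) ^ 2 * p x) := by
      funext x
      ring
    have hg1 : IntegrableOn (fun x => (-(2 * (I1 / M))) * ((x - m) * p x) + (I1 / M) ^ 2 * p x) A := by
      exact (hi1.const_mul _).add (h0.const_mul _)
    have hg2 : IntegrableOn (fun x => (-(2 * (I1 / M))) * ((x - m) * p x)) A := hi1.const_mul _
    have hg3 : IntegrableOn (fun x => (I1 / M) ^ 2 * p x) A := h0.const_mul _
    rw [h4]
    rw [integral_add hi2 hg1]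
    rw [integral_add hg2 hg3]
    rw [integral_const_mul _ _, integral_const_mul _ _, ← hI1, ← hI2, ← hM]
    ring
  rw [_root_.condVar, hset, hmean, mycondInt hs hA hpos, hvar, ← hp, ← hM]
  field_simp
  ring

end
lemma mystdPdf_pos (x : ℝ) : 0 < stdPdf x := by
  rw [stdPdf]
  positivity

lemma mystdPdf_even (x : ℝ) : stdPdf (-x) = stdPdf x := by
  rw [stdPdf, stdPdf, neg_sq]

end

theorem rule_20_60_20_condVar_eq
    (m s : ℝ) (hs : 0 < s) (x₀ q : ℝ) (hx₀ : x₀ < 0)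
    (hroot : -x₀ * stdCdf x₀ - stdPdf x₀ * (1 - 2 * stdCdf x₀) = 0)
    (hq : q = stdCdf x₀) :
    condVar m s 0 q = condVar m s q (1 - q) ∧
    condVar m s q (1 - q) = condVar m s (1 - q) 1 := by
  have hq0 : 0 < q := hq ▸ mystd_pos x₀
  have hqh : q < 1 / 2 := hq ▸ mystd_lt_half hx₀
  have hqne0 : q ≠ 0 := hq0.ne'
  have hqne1 : q ≠ 1 := by linarith
  have h1qne0 : (1 : ℝ) - q ≠ 0 := by intro h; linarith
  have h1qne1 : ¬((1 : ℝ) - q = 1) := by intro h; apply hqne0; linarith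
  have h2q : (0:ℝ) < 1 - 2 * q := by linarith
  have hsne : s ≠ 0 := hs.ne'
  have hQa : normQuantile m s q = m + s * x₀ :=
    myquantile hs (by rw [mycdf_shift hs]; exact hq.symm)
  have hQb : normQuantile m s (1 - q) = m + s * (-x₀) :=
    myquantile hs (by rw [mycdf_shift hs, mystd_symm, hq])
  have hab : m + s * x₀ ≤ m + s * (-x₀) := by nlinarith
  have hsetL : condSet m s 0 q = Set.Iic (m + s * x₀) := by
    ext x
    simp [condSet, hQa, hqne1, Set.mem_Iic]
  have hsetM : condSet m s q (1 - q) = Set.Ioc (m + s * x₀) (m + s * (-x₀)) := by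
    ext x
    simp [condSet, hQa, hQb, hqne0, h1qne1, Set.mem_Ioc]
  have hsetR : condSet m s (1 - q) 1 = Set.Ioi (m + s * (-x₀)) := by
    ext x
    simp [condSet, hQb, h1qne0, Set.mem_Ioi]
  have hFa : ∫ x in Set.Iic (m + s * x₀), gaussianPDFReal m (Real.toNNReal (s ^ 2)) x = q := by
    rw [← mycdf_eq hs, mycdf_shift hs]; exact hq.symm
  have hFb : ∫ x in Set.Iic (m + s * (-x₀)), gaussianPDFReal m (Real.toNNReal (s ^ 2)) x
      = 1 - q := by
    rw [← mycdf_eq hs, mycdf_shift hs, mystd_symm, hq]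
  have hMM : ∫ x in Set.Ioc (m + s * x₀) (m + s * (-x₀)),
      gaussianPDFReal m (Real.toNNReal (s ^ 2)) x = 1 - 2 * q := by
    rw [myint_Ioc _ (integrable_gaussianPDFReal m _) hab, hFa, hFb]; ring
  have hMR : ∫ x in Set.Ioi (m + s * (-x₀)),
      gaussianPDFReal m (Real.toNNReal (s ^ 2)) x = q := by
    rw [myint_Ioi0 hs, hFb]; ring
  have hpa : gaussianPDFReal m (Real.toNNReal (s ^ 2)) (m + s * x₀) = stdPdf x₀ / s :=
    mypdf_shift hs x₀
  have hpb : gaussianPDFReal m (Real.toNNReal (s ^ 2)) (m + s * (-x₀)) = stdPdf x₀ / s := by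
    rw [mypdf_shift hs (-x₀), mystdPdf_even]
  have ham : m + s * x₀ - m = s * x₀ := by ring
  have hbm : m + s * (-x₀) - m = -(s * x₀) := by ring
  have hVL := mycondVar_eq hs measurableSet_Iic hsetL (by rw [hFa]; exact hq0)
  rw [hFa, myint_Iic1 hs, myint_Iic2'' hs, hFa, hpa, ham] at hVL
  have hVM := mycondVar_eq hs measurableSet_Ioc hsetM (by rw [hMM]; linarith)
  rw [hMM, myint_Ioc _ (myint_x1 hs) hab, myint_Ioc _ (myint_xk hs 2) hab,
    myint_Iic1 hs, myint_Iic1 hs, myint_Iic2'' hs, myint_Iic2'' hs,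
    hFa, hFb, hpa, hpb, ham, hbm] at hVM
  have hVR := mycondVar_eq hs measurableSet_Ioi hsetR (by rw [hMR]; exact hq0)
  rw [hMR, myint_Ioi1 hs, myint_Ioi2'' hs, hMR, hpb, hbm] at hVR
  rw [← hq] at hroot
  have hphi : stdPdf x₀ = -x₀ * q / (1 - 2 * q) := by
    rw [eq_div_iff h2q.ne']
    linarith
  constructor
  · rw [hVL, hVM, hphi]
    have hq2 : (1:ℝ) - q * 2 ≠ 0 := by linarith
    field_simp
    ring
  · rw [hVM, hVR, hphi]
    have hq2 : (1:ℝ) - q * 2 ≠ 0 := by linarith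
    field_simp
    ring
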